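/- In a ring R with the SI property, every nilpotent element a lies in the lower nil-radical of R (the intersection of all prime ideals); consequently R is 2-primal, i.e., the set of nilpotent elements equals the lower nil-radical. -/

import Mathlib

/-- A prime two-sided ideal of a ring, as an additive subgroup closed under left and
right multiplication such that `aRb ⊆ P` implies `a ∈ P` or `b ∈ P`. -/
structure IsPrimeTwoSidedIdeal {R : Type*} [Ring R] (P : AddSubgroup R) : Prop where
  ne_top : (P : Set R) ≠ Set.univ
  mul_mem_left : ∀ a ∈ P, ∀ r : R, r * a ∈ P
  mul_mem_right : ∀ a ∈ P, ∀ r : R, a * r ∈ P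
  prime : ∀ a b : R, (∀ r : R, a * r * b ∈ P) → a ∈ P ∨ b ∈ P

section Aux

variable {R : Type*} [Ring R]

private lemma si_interleave (hSI : ∀ a b : R, a * b = 0 → ∀ r : R, a * r * b = 0) (a : R) :
    ∀ (l : List R) (x : R), x * a ^ (l.length + 1) = 0 →
      x * a * (l.map (fun s => s * a)).prod = 0 := by
  intro l
  induction l with
  | nil => intro x hx; simpa using hx
  | cons s t ih =>
    intro x hx
    have h1 : (x * a) * a ^ (t.length + 1) = 0 := by
      rw [mul_assoc, ← pow_succ']
      simpa using hx
    have h2 : (x * a) * s * a ^ (t.length + 1) = 0 := hSI _ _ h1 s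
    have h3 := ih (x * a * s) h2
    simp only [List.map_cons, List.prod_cons]
    calc x * a * (s * a * (List.map (fun s => s * a) t).prod)
        = x * a * s * a * (List.map (fun s => s * a) t).prod := by
          simp [mul_assoc]
      _ = 0 := h3

private lemma nilpotent_mem_prime (hSI : ∀ a b : R, a * b = 0 → ∀ r : R, a * r * b = 0)
    {P : AddSubgroup R} (hP : IsPrimeTwoSidedIdeal P) {a : R} (ha : IsNilpotent a) :
    a ∈ P := by
  obtain ⟨n, hn⟩ := ha
  by_contra hmem
  have key : ∀ k : ℕ, ∃ l : List R, k ≤ l.length ∧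
      a * (l.map (fun s => s * a)).prod ∉ P := by
    intro k; induction k with
    | zero => exact ⟨[], by simp, by simpa using hmem⟩
    | succ k ih =>
      obtain ⟨l, hl, hι⟩ := ih
      set p := a * (l.map (fun s => s * a)).prod with hp
      have hex : ¬ ∀ r : R, p * r * p ∈ P := fun h => (hP.prime p p h).elim hι hι
      push_neg at hex
      obtain ⟨r, hr⟩ := hex
      refine ⟨l ++ r :: l, ?_, ?_⟩
      · simp; omega
      · have he : a * ((l ++ r :: l).map (fun s => s * a)).prod = p * r * p := by
          simp [hp, mul_assoc]
        rw [he]; exact hr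
  obtain ⟨l, hl, hι⟩ := key n
  have hz : (1 : R) * a ^ (l.length + 1) = 0 := by
    have he : a ^ (l.length + 1) = a ^ n * a ^ (l.length + 1 - n) := by
      rw [← pow_add]; congr 1; omega
    rw [one_mul, he, hn, zero_mul]
  have h0 := si_interleave hSI a l 1 hz
  rw [one_mul] at h0
  exact hι (by rw [h0]; exact P.zero_mem)

private lemma exists_prime_not_mem (hSI : ∀ a b : R, a * b = 0 → ∀ r : R, a * r * b = 0)
    {x : R} (hx : ¬ IsNilpotent x) :
    ∃ P : AddSubgroup R, IsPrimeTwoSidedIdeal P ∧ x ∉ P := by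
  classical
  set F : Set (Set R) := {S | (0:R) ∈ S ∧ (∀ u ∈ S, ∀ v ∈ S, u + v ∈ S) ∧
      (∀ u ∈ S, -u ∈ S) ∧ (∀ u ∈ S, ∀ r : R, r * u ∈ S ∧ u * r ∈ S) ∧
      (∀ n : ℕ, x ^ (n+1) ∉ S)} with hF
  have h0 : ({0} : Set R) ∈ F := by
    refine ⟨rfl, ?_, ?_, ?_, ?_⟩
    · intro u hu v hv
      simp only [Set.mem_singleton_iff] at *
      rw [hu, hv, add_zero]
    · intro u hu
      simp only [Set.mem_singleton_iff] at *
      rw [hu, neg_zero]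
    · intro u hu r
      simp only [Set.mem_singleton_iff] at *
      rw [hu, mul_zero, zero_mul]; exact ⟨rfl, rfl⟩
    · intro n h
      simp only [Set.mem_singleton_iff] at h
      exact hx ⟨n + 1, h⟩
  have hchain : ∀ c ⊆ F, IsChain (· ⊆ ·) c → c.Nonempty →
      ∃ ub ∈ F, ∀ s ∈ c, s ⊆ ub := by
    intro c hcF hch hcne
    refine ⟨⋃₀ c, ⟨?_, ?_, ?_, ?_, ?_⟩, fun s hs => Set.subset_sUnion_of_mem hs⟩
    · obtain ⟨s, hs⟩ := hcne
      exact ⟨s, hs, (hcF hs).1⟩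
    · rintro u ⟨s, hsc, hus⟩ v ⟨t, htc, hvt⟩
      rcases hch.total hsc htc with h | h
      · exact ⟨t, htc, (hcF htc).2.1 _ (h hus) _ hvt⟩
      · exact ⟨s, hsc, (hcF hsc).2.1 _ hus _ (h hvt)⟩
    · rintro u ⟨s, hsc, hus⟩
      exact ⟨s, hsc, (hcF hsc).2.2.1 _ hus⟩
    · rintro u ⟨s, hsc, hus⟩ r
      exact ⟨⟨s, hsc, ((hcF hsc).2.2.2.1 _ hus r).1⟩, ⟨s, hsc, ((hcF hsc).2.2.2.1 _ hus r).2⟩⟩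
    · rintro n ⟨s, hsc, hxs⟩
      exact (hcF hsc).2.2.2.2 n hxs
  obtain ⟨M, -, hM⟩ := zorn_subset_nonempty F hchain _ h0
  obtain ⟨Mz, Madd, Mneg, Mmul, Mpow⟩ := hM.prop
  set P : AddSubgroup R :=
    { carrier := M
      zero_mem' := Mz
      add_mem' := fun ha hb => Madd _ ha _ hb
      neg_mem' := fun ha => Mneg _ ha } with hPdef
  have hmemP : ∀ y : R, y ∈ P ↔ y ∈ M := fun y => Iff.rfl
  -- the two-sided ideal generated by `M` and an element `a`
  have key : ∀ a : R, a ∉ M →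
      ∃ m : ℕ, x ^ (m+1) ∈ AddSubgroup.closure (M ∪ {y : R | ∃ s t : R, y = s * a * t}) := by
    intro a haM
    set Na := AddSubgroup.closure (M ∪ {y : R | ∃ s t : R, y = s * a * t}) with hNa
    have mulNa : ∀ u ∈ Na, ∀ r : R, r * u ∈ Na ∧ u * r ∈ Na := by
      intro u hu
      refine AddSubgroup.closure_induction
        (p := fun u _ => ∀ r : R, r * u ∈ Na ∧ u * r ∈ Na) ?_ ?_ ?_ ?_ hu
      · rintro c (hc | ⟨s, t, rfl⟩) r
        · exact ⟨AddSubgroup.subset_closure (Or.inl ((Mmul c hc r).1)),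
            AddSubgroup.subset_closure (Or.inl ((Mmul c hc r).2))⟩
        · constructor
          · refine AddSubgroup.subset_closure (Or.inr ⟨r * s, t, ?_⟩)
            simp [mul_assoc]
          · refine AddSubgroup.subset_closure (Or.inr ⟨s, t * r, ?_⟩)
            simp [mul_assoc]
      · intro r; simp only [mul_zero, zero_mul]; exact ⟨Na.zero_mem, Na.zero_mem⟩
      · intro u v hu' hv' ihu ihv r
        rw [mul_add, add_mul]
        exact ⟨Na.add_mem (ihu r).1 (ihv r).1, Na.add_mem (ihu r).2 (ihv r).2⟩
      · intro u hu' ihu r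
        rw [mul_neg, neg_mul]
        exact ⟨Na.neg_mem (ihu r).1, Na.neg_mem (ihu r).2⟩
    by_contra hno
    push_neg at hno
    have hNaF : (↑Na : Set R) ∈ F :=
      ⟨Na.zero_mem, fun u hu v hv => Na.add_mem hu hv, fun u hu => Na.neg_mem hu,
        fun u hu r => mulNa u hu r, hno⟩
    have hsub : M ⊆ (↑Na : Set R) :=
      fun y hy => AddSubgroup.subset_closure (Or.inl hy)
    have hba : (↑Na : Set R) ⊆ M := hM.2 hNaF hsub
    exact haM (hba (AddSubgroup.subset_closure (Or.inr ⟨1, 1, by simp⟩)))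
  have hprime : ∀ a b : R, (∀ r : R, a * r * b ∈ M) → a ∈ M ∨ b ∈ M := by
    intro a b hab
    by_contra h
    push_neg at h
    obtain ⟨haM, hbM⟩ := h
    obtain ⟨m, hxa⟩ := key a haM
    obtain ⟨k, hxb⟩ := key b hbM
    set Na := AddSubgroup.closure (M ∪ {y : R | ∃ s t : R, y = s * a * t}) with hNa
    set Nb := AddSubgroup.closure (M ∪ {y : R | ∃ s t : R, y = s * b * t}) with hNb
    have prodM : ∀ u ∈ Na, ∀ v ∈ Nb, u * v ∈ M := by
      intro u hu
      refine AddSubgroup.closure_induction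
        (p := fun u _ => ∀ v ∈ Nb, u * v ∈ M) ?_ ?_ ?_ ?_ hu
      · rintro c (hc | ⟨s, t, rfl⟩) v hv
        · exact (Mmul c hc v).2
        · refine AddSubgroup.closure_induction
            (p := fun v _ => s * a * t * v ∈ M) ?_ ?_ ?_ ?_ hv
          · rintro d (hd | ⟨s', t', rfl⟩)
            · exact (Mmul d hd _).1
            · have h1 : a * (t * s') * b ∈ M := hab (t * s')
              have h2 : s * (a * (t * s') * b) ∈ M := (Mmul _ h1 s).1
              have h3 : s * (a * (t * s') * b) * t' ∈ M := (Mmul _ h2 t').2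
              have he : s * a * t * (s' * b * t') = s * (a * (t * s') * b) * t' := by
                simp [mul_assoc]
              show s * a * t * (s' * b * t') ∈ M
              rw [he]; exact h3
          · simp only [mul_zero]; exact Mz
          · intro v w _ _ ihv ihw; simp only [mul_add]; exact Madd _ ihv _ ihw
          · intro v _ ihv; simp only [mul_neg]; exact Mneg _ ihv
      · intro v hv; simp only [zero_mul]; exact Mz
      · intro u w _ _ ihu ihw v hv
        simp only [add_mul]; exact Madd _ (ihu v hv) _ (ihw v hv)
      · intro u _ ihu v hv
        simp only [neg_mul]; exact Mneg _ (ihu v hv)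
    have hprod : x ^ (m + 1) * x ^ (k + 1) ∈ M := prodM _ hxa _ hxb
    rw [← pow_add] at hprod
    have he : m + 1 + (k + 1) = (m + k + 1) + 1 := by omega
    rw [he] at hprod
    exact Mpow (m + k + 1) hprod
  refine ⟨P, ⟨?_, ?_, ?_, hprime⟩, ?_⟩
  · intro h
    have : x ^ (0 + 1) ∈ M := by
      have := h.symm.subset (Set.mem_univ (x ^ (0 + 1)))
      exact this
    exact Mpow 0 this
  · exact fun u hu r => (Mmul u hu r).1
  · exact fun u hu r => (Mmul u hu r).2
  · intro hxP
    exact Mpow 0 (by simpa using (hmemP x).mp hxP)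

end Aux

theorem stmt_6 (R : Type*) [Ring R]
    (hSI : ∀ a b : R, a * b = 0 → ∀ r : R, a * r * b = 0) :
    (∀ a : R, IsNilpotent a → ∀ P : AddSubgroup R, IsPrimeTwoSidedIdeal P → a ∈ P) ∧
    {a : R | IsNilpotent a} =
      ⋂ P ∈ {P : AddSubgroup R | IsPrimeTwoSidedIdeal P}, (P : Set R) := by
  constructor
  · intro a ha P hP
    exact nilpotent_mem_prime hSI hP ha
  · apply Set.Subset.antisymm
    · intro a ha
      simp only [Set.mem_iInter]
      intro P hP
      exact nilpotent_mem_prime hSI hP ha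
    · intro a ha
      by_contra h
      obtain ⟨P, hP, hx⟩ := exists_prime_not_mem hSI h
      simp only [Set.mem_iInter] at ha
      exact hx (ha P hP)
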